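/- Let d ≥ 2 and λ > 0, and let μ_λ be the product probability measure on ℕ^{ℤ^d} whose coordinates ζ(j), j ∈ ℤ^d, are i.i.d. Poisson with parameter λ. Then for every a > 0 satisfying λ·(2β_d·a + 3)^d ≤ π_d·a^d, one has μ_λ({ζ : R_0(ζ) > a}) ≤ exp(−λ·(2β_d·a + 3)^d · g(λ·(2β_d·a + 3)^d/(π_d·a^d))), where g(x) = (x − 1 − log x)/x. -/

import Mathlib

open MeasureTheory
open scoped ENNReal NNReal

noncomputable section

/-- The level-`m` cube `K_i^m` in `ℝ^d`:
`K_i^m = {x : |x^(l) - m·i^(l)| ≤ m/2 for all l}`. -/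
def cube (d : ℕ) (m : ℝ) (i : Fin d → ℤ) : Set (EuclideanSpace ℝ (Fin d)) :=
  {x | ∀ l, |x l - m * (i l : ℝ)| ≤ m / 2}

/-- The distance `ρ(A,B) = inf {|x - y| : x ∈ A, y ∈ B}` between two sets. -/
def rho (d : ℕ) (A B : Set (EuclideanSpace ℝ (Fin d))) : ℝ :=
  sInf (Set.image2 dist A B)

/-- The discrete ball `B_i(r)`: the union of the level-1 cubes `K_j^1` with
`ρ(K_i^1, K_j^1) ≤ r` (and `B_i(0) = ∅`). -/
def dball (d : ℕ) (i : Fin d → ℤ) (r : ℝ) : Set (EuclideanSpace ℝ (Fin d)) :=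
  if 0 < r then
    ⋃ j ∈ {j : Fin d → ℤ | rho d (cube d 1 i) (cube d 1 j) ≤ r}, cube d 1 j
  else ∅

/-- `π_d`, the Lebesgue volume of the unit Euclidean ball in `ℝ^d`. -/
def unitBallVol (d : ℕ) : ℝ :=
  (volume (Metric.ball (0 : EuclideanSpace ℝ (Fin d)) 1)).toReal

/-- `β_d = ⌈3 + 2√d · π_d^(1/d)⌉`. -/
def betaD (d : ℕ) : ℝ :=
  (⌈3 + 2 * Real.sqrt d * (unitBallVol d) ^ ((1 : ℝ) / d)⌉ : ℤ)

/-- The embedding of `ℤ^d` into `ℝ^d`. -/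
def embedZ (d : ℕ) (i : Fin d → ℤ) : EuclideanSpace ℝ (Fin d) :=
  WithLp.toLp 2 (fun l => (i l : ℝ))

/-- `A(K_j^m)`: the union of `K_j^m` with its `3^d - 1` neighbouring level-`m`
cubes, i.e. the cubes `K_i^m` with `‖i - j‖_∞ ≤ 1`. -/
def nbhd (d : ℕ) (m : ℝ) (j : Fin d → ℤ) : Set (EuclideanSpace ℝ (Fin d)) :=
  ⋃ i ∈ {i : Fin d → ℤ | ‖i - j‖ ≤ 1}, cube d m i

/-- The radius `R_i(ζ) = inf {r > 0 : Σ_{j : ρ(K_j^1,K_i^1) ≤ β_d r} ζ(j) ≤ π_d r^d}`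
if `ζ i > 0` (with `inf ∅ = +∞`, so the value is taken in `ℝ≥0∞`), and `R_i(ζ) = 0`
if `ζ i = 0`. -/
def Rad (d : ℕ) (ζ : (Fin d → ℤ) → ℕ) (i : Fin d → ℤ) : ℝ≥0∞ :=
  if ζ i = 0 then 0
  else sInf {t : ℝ≥0∞ | ∃ r : ℝ, 0 < r ∧ t = ENNReal.ofReal r ∧
    ((∑ᶠ j ∈ {j : Fin d → ℤ |
        rho d (cube d 1 j) (cube d 1 i) ≤ betaD d * r}, ζ j : ℕ) : ℝ)
      ≤ unitBallVol d * r ^ d}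

/-- The sup norm `‖x‖_∞` on `ℝ^d`. -/
def supNorm (d : ℕ) (x : EuclideanSpace ℝ (Fin d)) : ℝ := ⨆ l, |x l|

/-- `g(x) = (x − 1 − log x)/x` for `x > 0`. -/
def gChernoff (x : ℝ) : ℝ := (x - 1 - Real.log x) / x

/-- The Poisson mass function with parameter `λ`: `n ↦ e^{−λ} λ^n / n!`. -/
def poissonPMFR (lam : ℝ) (n : ℕ) : ℝ := Real.exp (-lam) * lam ^ n / n.factorial

/-- `μ` is the product probability measure on `ℕ^{ℤ^d}` whose coordinates
`ζ(j)`, `j ∈ ℤ^d`, are i.i.d. Poisson with parameter `λ`, characterized by its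
values on cylinder events. -/
def IsIIDPoisson (d : ℕ) (lam : ℝ) (μ : Measure ((Fin d → ℤ) → ℕ)) : Prop :=
  IsProbabilityMeasure μ ∧
  ∀ (F : Finset (Fin d → ℤ)) (k : (Fin d → ℤ) → ℕ),
    μ {ζ | ∀ j ∈ F, ζ j = k j} = ∏ j ∈ F, ENNReal.ofReal (poissonPMFR lam (k j))

lemma betaD_ge_three (d : ℕ) : (3:ℝ) ≤ betaD d := by
  have h0 : (0:ℝ) ≤ 2 * Real.sqrt d * (unitBallVol d) ^ ((1:ℝ)/d) := by
    have h1 : (0:ℝ) ≤ unitBallVol d := ENNReal.toReal_nonneg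
    positivity
  have := Int.le_ceil (3 + 2 * Real.sqrt d * (unitBallVol d) ^ ((1:ℝ)/d))
  unfold betaD
  linarith

lemma unitBallVol_pos (d : ℕ) : 0 < unitBallVol d := by
  have h1 : (0:ℝ≥0∞) < volume (Metric.ball (0 : EuclideanSpace ℝ (Fin d)) 1) :=
    Metric.measure_ball_pos _ _ one_pos
  have h2 : volume (Metric.ball (0 : EuclideanSpace ℝ (Fin d)) 1) ≠ ⊤ :=
    measure_ball_lt_top.ne
  exact ENNReal.toReal_pos h1.ne' h2

lemma center_mem_cube (d : ℕ) (j : Fin d → ℤ) : embedZ d j ∈ cube d 1 j := by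
  intro l
  simp [embedZ]

lemma abs_coord_le_dist (d : ℕ) (x y : EuclideanSpace ℝ (Fin d)) (l : Fin d) :
    |x l - y l| ≤ dist x y := by
  rw [EuclideanSpace.dist_eq, ← Real.sqrt_sq_eq_abs]
  apply Real.sqrt_le_sqrt
  have h := Finset.single_le_sum (f := fun i => dist (x i) (y i) ^ 2)
    (fun i _ => sq_nonneg _) (Finset.mem_univ l)
  simpa [Real.dist_eq, sq_abs] using h

lemma rho_lower (d : ℕ) (j : Fin d → ℤ) (l : Fin d) :
    |(j l : ℝ)| - 1 ≤ rho d (cube d 1 j) (cube d 1 0) := by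
  apply le_csInf
  · exact ⟨dist (embedZ d j) (embedZ d 0),
      Set.mem_image2_of_mem (center_mem_cube d j) (center_mem_cube d 0)⟩
  · rintro b ⟨x, hx, y, hy, rfl⟩
    have h1 : |x l - (j l:ℝ)| ≤ 1/2 := by simpa using hx l
    have h2 : |y l| ≤ 1/2 := by simpa using hy l
    have h3 : |x l - y l| ≤ dist x y := abs_coord_le_dist d x y l
    have h4 : |(j l:ℝ)| ≤ |x l - (j l:ℝ)| + |x l - y l| + |y l| := by
      have := abs_sub (x l - y l) (x l - (j l:ℝ))
      calc |(j l:ℝ)| = |(x l - y l) - (x l - (j l:ℝ)) + y l| := by ring_nf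
        _ ≤ |(x l - y l) - (x l - (j l:ℝ))| + |y l| := abs_add_le _ _
        _ ≤ |x l - y l| + |x l - (j l:ℝ)| + |y l| := by
            have := abs_sub_abs_le_abs_sub (x l - y l) (x l - (j l:ℝ))
            have h5 : |(x l - y l) - (x l - (j l:ℝ))| ≤ |x l - y l| + |x l - (j l:ℝ)| :=
              abs_sub _ _
            linarith
        _ = |x l - (j l:ℝ)| + |x l - y l| + |y l| := by ring
    linarith

open Classical in
def Jfin (d : ℕ) (a : ℝ) : Finset (Fin d → ℤ) :=
  (Fintype.piFinset (fun _ : Fin d =>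
      Finset.Icc (-(⌊betaD d * a + 1⌋)) ⌊betaD d * a + 1⌋)).filter
    (fun j => rho d (cube d 1 j) (cube d 1 0) ≤ betaD d * a)

lemma Jset_eq (d : ℕ) (a : ℝ) :
    {j : Fin d → ℤ | rho d (cube d 1 j) (cube d 1 0) ≤ betaD d * a} = ↑(Jfin d a) := by
  ext j
  simp only [Jfin, Finset.coe_filter, Set.mem_setOf_eq, Fintype.mem_piFinset]
  constructor
  · intro h
    refine ⟨fun l => ?_, h⟩
    have h1 := rho_lower d j l
    have h2 : |(j l:ℝ)| ≤ betaD d * a + 1 := by linarith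
    rw [abs_le] at h2
    rw [Finset.mem_Icc]
    constructor
    · rw [neg_le]
      exact Int.le_floor.mpr (by push_cast; linarith [h2.1])
    · exact Int.le_floor.mpr h2.2
  · exact fun h => h.2

lemma Jfin_card_le (d : ℕ) (a : ℝ) (ha : 0 < a) :
    ((Jfin d a).card : ℝ) ≤ (2 * betaD d * a + 3) ^ d := by
  set M : ℤ := ⌊betaD d * a + 1⌋ with hMdef
  have hβ := betaD_ge_three d
  have hM0 : (0:ℤ) ≤ M := Int.le_floor.mpr (by push_cast; nlinarith)
  have hcard : (Jfin d a).card ≤ ((2*M+1).toNat) ^ d := by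
    calc (Jfin d a).card
        ≤ (Fintype.piFinset (fun _ : Fin d => Finset.Icc (-M) M)).card :=
          Finset.card_filter_le _ _
      _ = ∏ _l : Fin d, (Finset.Icc (-M) M).card := Fintype.card_piFinset _
      _ = ((2*M+1).toNat) ^ d := by
          rw [Finset.prod_const, Int.card_Icc]
          congr 2
          · ring
          · simp
  have hcast : (((2*M+1).toNat : ℕ) : ℝ) = 2*(M:ℝ)+1 := by
    have hz : (((2*M+1).toNat : ℕ) : ℤ) = 2*M+1 := Int.toNat_of_nonneg (by omega)
    have := congrArg (fun z : ℤ => (z : ℝ)) hz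
    push_cast at this
    linarith
  calc ((Jfin d a).card : ℝ) ≤ (((2*M+1).toNat) ^ d : ℕ) := by exact_mod_cast hcard
    _ = (2*(M:ℝ)+1) ^ d := by rw [Nat.cast_pow, hcast]
    _ ≤ (2 * betaD d * a + 3) ^ d := by
        apply pow_le_pow_left₀ (by positivity)
        have := Int.floor_le (betaD d * a + 1)
        rw [← hMdef] at this
        linarith

lemma tsum_pi_prod_fin : ∀ (n : ℕ) (f : Fin n → ℕ → ℝ≥0∞),
    ∑' v : Fin n → ℕ, ∏ i, f i (v i) = ∏ i, ∑' k, f i k := by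
  intro n
  induction n with
  | zero =>
    intro f
    simp only [Finset.univ_eq_empty, Finset.prod_empty]
    exact tsum_eq_single (fun i => i.elim0) (fun b hb => absurd (funext fun i => i.elim0) hb) |>.trans rfl
  | succ n ih =>
    intro f
    rw [← (Fin.consEquiv (fun _ => ℕ)).tsum_eq (fun v => ∏ i, f i (v i))]
    have hsplit : ∀ p : ℕ × (Fin n → ℕ),
        (∏ i, f i ((Fin.consEquiv (fun _ => ℕ)) p i)) =
          f 0 p.1 * ∏ i : Fin n, f i.succ (p.2 i) := by
      intro p
      rw [Fin.prod_univ_succ]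
      simp [Fin.consEquiv]
    calc ∑' p : ℕ × (Fin n → ℕ), (∏ i, f i ((Fin.consEquiv (fun _ => ℕ)) p i))
        = ∑' (x : ℕ) (v : Fin n → ℕ), f 0 x * ∏ i : Fin n, f i.succ (v i) := by
          rw [← ENNReal.tsum_prod]
          exact tsum_congr hsplit
      _ = (∑' x : ℕ, f 0 x) * ∑' v : Fin n → ℕ, ∏ i : Fin n, f i.succ (v i) := by
          rw [← ENNReal.tsum_mul_right]
          exact tsum_congr fun x => ENNReal.tsum_mul_left
      _ = ∏ i, ∑' k, f i k := by
          rw [ih, Fin.prod_univ_succ]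

lemma tsum_pi_prod {ι : Type*} [Fintype ι] (f : ι → ℕ → ℝ≥0∞) :
    ∑' v : ι → ℕ, ∏ i, f i (v i) = ∏ i, ∑' k, f i k := by
  obtain ⟨n, ⟨e⟩⟩ : ∃ n, Nonempty (ι ≃ Fin n) := ⟨Fintype.card ι, ⟨Fintype.equivFin ι⟩⟩
  have key := tsum_pi_prod_fin n (fun i k => f (e.symm i) k)
  calc ∑' v : ι → ℕ, ∏ i, f i (v i)
      = ∑' v : Fin n → ℕ, ∏ i : Fin n, f (e.symm i) (v i) := by
        rw [← (Equiv.piCongrLeft' (fun _ => ℕ) e).tsum_eq (fun v => ∏ i : Fin n, f (e.symm i) (v i))]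
        apply tsum_congr
        intro v
        exact (Equiv.prod_comp e.symm fun i => f i (v i)).symm.trans (Finset.prod_congr rfl
          (fun i _ => by simp [Equiv.piCongrLeft']))
    _ = ∏ i : Fin n, ∑' k, f (e.symm i) k := key
    _ = ∏ i, ∑' k, f i k := Equiv.prod_comp e.symm fun i => ∑' k, f i k

lemma poisson_mgf (lam θ : ℝ) (hlam : 0 < lam) :
    ∑' n : ℕ, ENNReal.ofReal (Real.exp (θ * n) * poissonPMFR lam n)
      = ENNReal.ofReal (Real.exp (lam * (Real.exp θ - 1))) := by
  have hfe : ∀ n : ℕ, Real.exp (θ * n) * poissonPMFR lam n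
      = Real.exp (-lam) * ((lam * Real.exp θ) ^ n / n.factorial) := by
    intro n
    unfold poissonPMFR
    rw [mul_comm θ (n:ℝ), Real.exp_nat_mul, mul_pow]
    have : (n.factorial : ℝ) ≠ 0 := by positivity
    field_simp
  have hsum : Summable (fun n : ℕ => Real.exp (θ*n) * poissonPMFR lam n) := by
    apply Summable.congr
      ((Real.summable_pow_div_factorial (lam * Real.exp θ)).mul_left (Real.exp (-lam)))
    intro n
    rw [hfe n]
  have hnn : ∀ n : ℕ, 0 ≤ Real.exp (θ*n) * poissonPMFR lam n := fun n => by
    unfold poissonPMFR; positivity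
  rw [← ENNReal.ofReal_tsum_of_nonneg hnn hsum]
  congr 1
  have h1 : ∑' n : ℕ, Real.exp (θ*n) * poissonPMFR lam n
      = Real.exp (-lam) * ∑' n:ℕ, (lam * Real.exp θ)^n / n.factorial := by
    rw [← tsum_mul_left]
    exact tsum_congr hfe
  have h2 : ∑' n:ℕ, (lam*Real.exp θ)^n / (n.factorial:ℝ) = Real.exp (lam*Real.exp θ) := by
    rw [Real.exp_eq_exp_ℝ, NormedSpace.exp_eq_tsum_div]
  rw [h1, h2, ← Real.exp_add]
  ring_nf

open Classical in
lemma measure_sum_gt_le (d : ℕ) (lam : ℝ) (hlam : 0 < lam)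
    (μ : Measure ((Fin d → ℤ) → ℕ))
    (hμ : ∀ (F : Finset (Fin d → ℤ)) (k : (Fin d → ℤ) → ℕ),
      μ {ζ | ∀ j ∈ F, ζ j = k j} = ∏ j ∈ F, ENNReal.ofReal (poissonPMFR lam (k j)))
    (F : Finset (Fin d → ℤ)) (T θ : ℝ) (hθ : 0 ≤ θ) :
    μ {ζ | T < ((∑ j ∈ F, ζ j : ℕ) : ℝ)} ≤
      ENNReal.ofReal (Real.exp (-(θ*T))) *
        (ENNReal.ofReal (Real.exp (lam * (Real.exp θ - 1)))) ^ F.card := by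
  set extv : (↥F → ℕ) → ((Fin d → ℤ) → ℕ) :=
    fun v j => if h : j ∈ F then v ⟨j, h⟩ else 0 with hextv
  set C : (↥F → ℕ) → Set ((Fin d → ℤ) → ℕ) :=
    fun v => {ζ | ∀ j ∈ F, ζ j = extv v j} with hCdef
  have hC : ∀ v, μ (C v) = ∏ j : ↥F, ENNReal.ofReal (poissonPMFR lam (v j)) := by
    intro v
    rw [hCdef, hμ F (extv v), ← Finset.prod_coe_sort]
    exact Finset.prod_congr rfl fun j _ => by simp [hextv, j.2]
  have meas : ∀ v, MeasurableSet (C v) := by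
    intro v
    have : C v = ⋂ j ∈ F, (fun ζ : (Fin d → ℤ) → ℕ => ζ j) ⁻¹' {extv v j} := by
      ext ζ; simp [hCdef]
    rw [this]
    exact MeasurableSet.biInter F.countable_toSet fun j _ =>
      (measurable_pi_apply j) (measurableSet_singleton _)
  set A : Set (↥F → ℕ) := {v | T < ((∑ j : ↥F, v j : ℕ) : ℝ)} with hAdef
  have hsub : {ζ : (Fin d → ℤ) → ℕ | T < ((∑ j ∈ F, ζ j : ℕ) : ℝ)} ⊆ ⋃ v : A, C v.val := by
    intro ζ hζ
    set v : ↥F → ℕ := fun j => ζ j with hv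
    have hsum : (∑ j : ↥F, v j) = ∑ j ∈ F, ζ j := Finset.sum_coe_sort F ζ
    have hvA : v ∈ A := by
      rw [hAdef]
      simp only [Set.mem_setOf_eq, hsum]
      exact hζ
    refine Set.mem_iUnion.mpr ⟨⟨v, hvA⟩, ?_⟩
    intro j hj
    simp [hCdef, hextv, hj, hv]
  have hdisj : Pairwise (Function.onFun Disjoint fun v : A => C v.val) := by
    rintro ⟨v, hv⟩ ⟨w, hw⟩ hne
    have hvw : v ≠ w := fun h => hne (Subtype.ext h)
    rw [Function.onFun]
    refine Set.disjoint_left.mpr fun ζ h1 h2 => hvw (funext fun j => ?_)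
    have e1 := h1 j.val j.2
    have e2 := h2 j.val j.2
    rw [hextv] at e1 e2
    simp only [j.2, dif_pos] at e1 e2
    rw [← e1, ← e2]
  calc μ {ζ : (Fin d → ℤ) → ℕ | T < ((∑ j ∈ F, ζ j : ℕ) : ℝ)}
      ≤ μ (⋃ v : A, C v.val) := measure_mono hsub
    _ ≤ ∑' v : A, μ (C v.val) := measure_iUnion_le _
    _ = ∑' v : A, ∏ j : ↥F, ENNReal.ofReal (poissonPMFR lam (v.val j)) := by
        exact tsum_congr fun v => hC v.val
    _ ≤ ∑' v : A, (ENNReal.ofReal (Real.exp (-(θ*T))) *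
          ∏ j : ↥F, ENNReal.ofReal (Real.exp (θ * (v.val j)) * poissonPMFR lam (v.val j))) := by
        apply ENNReal.tsum_le_tsum
        rintro ⟨v, hv⟩
        rw [← ENNReal.ofReal_prod_of_nonneg (fun j _ => by unfold poissonPMFR; positivity),
          ← ENNReal.ofReal_prod_of_nonneg (fun j _ => by unfold poissonPMFR; positivity),
          ← ENNReal.ofReal_mul (Real.exp_nonneg _)]
        apply ENNReal.ofReal_le_ofReal
        have hvT : T ≤ ((∑ j : ↥F, v j : ℕ) : ℝ) := le_of_lt hv
        have hprodnn : (0:ℝ) ≤ ∏ j : ↥F, poissonPMFR lam (v j) :=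
          Finset.prod_nonneg fun j _ => by unfold poissonPMFR; positivity
    
        have hsplit : ∏ j : ↥F, (Real.exp (θ * (v j)) * poissonPMFR lam (v j))
            = Real.exp (θ * ((∑ j : ↥F, v j : ℕ) : ℝ)) * ∏ j : ↥F, poissonPMFR lam (v j) := by
          rw [Finset.prod_mul_distrib, ← Real.exp_sum]
          congr 2
          push_cast
          rw [Finset.mul_sum]
        rw [hsplit, ← mul_assoc, ← Real.exp_add]
        have h1 : (1:ℝ) ≤ Real.exp (-(θ*T) + θ * ((∑ j : ↥F, v j : ℕ) : ℝ)) := by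
          rw [← Real.exp_zero]
          apply Real.exp_le_exp.mpr
          nlinarith
        nlinarith [Real.exp_pos (-(θ*T) + θ * ((∑ j : ↥F, v j : ℕ) : ℝ))]
    _ ≤ ∑' v : ↥F → ℕ, (ENNReal.ofReal (Real.exp (-(θ*T))) *
          ∏ j : ↥F, ENNReal.ofReal (Real.exp (θ * (v j)) * poissonPMFR lam (v j))) :=
        ENNReal.tsum_comp_le_tsum_of_injective Subtype.val_injective _
    _ = ENNReal.ofReal (Real.exp (-(θ*T))) *
          ∑' v : ↥F → ℕ, ∏ j : ↥F, ENNReal.ofReal (Real.exp (θ * (v j)) * poissonPMFR lam (v j)) :=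
        ENNReal.tsum_mul_left
    _ = ENNReal.ofReal (Real.exp (-(θ*T))) *
          ∏ j : ↥F, ∑' n : ℕ, ENNReal.ofReal (Real.exp (θ * n) * poissonPMFR lam n) := by
        rw [tsum_pi_prod (fun (_ : ↥F) (n : ℕ) => ENNReal.ofReal (Real.exp (θ * n) * poissonPMFR lam n))]
    _ = ENNReal.ofReal (Real.exp (-(θ*T))) *
          (ENNReal.ofReal (Real.exp (lam * (Real.exp θ - 1)))) ^ F.card := by
        rw [Finset.prod_congr rfl fun (j : ↥F) _ => poisson_mgf lam θ hlam]
        · rw [Finset.prod_const, Finset.card_univ, Fintype.card_coe]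

lemma event_subset (d : ℕ) (a : ℝ) (ha : 0 < a) :
    {ζ : (Fin d → ℤ) → ℕ | ENNReal.ofReal a < Rad d ζ 0} ⊆
      {ζ : (Fin d → ℤ) → ℕ | unitBallVol d * a ^ d < ((∑ j ∈ Jfin d a, ζ j : ℕ) : ℝ)} := by
  intro ζ hζ
  simp only [Set.mem_setOf_eq] at hζ ⊢
  by_contra hc
  rw [not_lt] at hc
  by_cases h0 : ζ 0 = 0
  · rw [Rad, if_pos h0] at hζ
    simp at hζ
  · rw [Rad, if_neg h0] at hζ
    have hmem : ENNReal.ofReal a ∈ {t : ℝ≥0∞ | ∃ r : ℝ, 0 < r ∧ t = ENNReal.ofReal r ∧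
        ((∑ᶠ j ∈ {j : Fin d → ℤ |
            rho d (cube d 1 j) (cube d 1 (0 : Fin d → ℤ)) ≤ betaD d * r}, ζ j : ℕ) : ℝ)
          ≤ unitBallVol d * r ^ d} := by
      refine ⟨a, ha, rfl, ?_⟩
      have hfin : ∑ᶠ j ∈ {j : Fin d → ℤ |
          rho d (cube d 1 j) (cube d 1 (0 : Fin d → ℤ)) ≤ betaD d * a}, ζ j
          = ∑ j ∈ Jfin d a, ζ j := by
        rw [Jset_eq d a, finsum_mem_coe_finset]
      rw [hfin]
      exact hc
    exact absurd hζ (not_lt.mpr (sInf_le hmem))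

lemma final_bound (lam B T : ℝ) (hlam : 0 < lam) (hB : 0 < B) (hT : 0 < T)
    (hνT : lam * B ≤ T) (N : ℕ) (hN : (N:ℝ) ≤ B) :
    ENNReal.ofReal (Real.exp (-(Real.log (T/(lam*B)) * T))) *
      (ENNReal.ofReal (Real.exp (lam * (Real.exp (Real.log (T/(lam*B))) - 1)))) ^ N ≤
    ENNReal.ofReal (Real.exp (-(lam * B * gChernoff (lam * B / T)))) := by
  have hν : 0 < lam * B := by positivity
  have hexp : Real.exp (Real.log (T/(lam*B))) = T/(lam*B) := Real.exp_log (by positivity)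
  rw [← ENNReal.ofReal_pow (Real.exp_nonneg _), ← ENNReal.ofReal_mul (Real.exp_nonneg _),
    ← Real.exp_nat_mul, ← Real.exp_add]
  apply ENNReal.ofReal_le_ofReal
  apply Real.exp_le_exp.mpr
  rw [hexp]
  have hlog : Real.log (lam * B / T) = - Real.log (T / (lam*B)) := by
    rw [← Real.log_inv]
    congr 1
    field_simp
  have hg : lam * B * gChernoff (lam * B / T)
      = lam * B - T + T * Real.log (T/(lam*B)) := by
    unfold gChernoff
    rw [hlog]
    field_simp
    ring
  rw [hg]
  have hTν : lam * B * (T/(lam*B)) = T := by field_simp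
  have hfrac : 0 ≤ T/(lam*B) - 1 := by
    have : (1:ℝ) ≤ T/(lam*B) := (one_le_div hν).mpr hνT
    linarith
  have hNlam : (N:ℝ) * lam ≤ lam * B := by nlinarith
  nlinarith [mul_le_mul_of_nonneg_right hNlam hfrac]

/-- Let `d ≥ 2` and `λ > 0`, and let `μ_λ` be the product
probability measure on `ℕ^{ℤ^d}` whose coordinates `ζ(j)`, `j ∈ ℤ^d`, are
i.i.d. Poisson with parameter `λ`. Then for every `a > 0` satisfying
`λ·(2β_d·a + 3)^d ≤ π_d·a^d`, one has
`μ_λ({ζ : R_0(ζ) > a}) ≤ exp(−λ·(2β_d·a + 3)^d · g(λ·(2β_d·a + 3)^d/(π_d·a^d)))`,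
where `g(x) = (x − 1 − log x)/x`. -/
theorem statement8 (d : ℕ) (hd : 2 ≤ d) (lam : ℝ) (hlam : 0 < lam)
    (μ : Measure ((Fin d → ℤ) → ℕ)) (hμ : IsIIDPoisson d lam μ)
    (a : ℝ) (ha : 0 < a)
    (hcond : lam * (2 * betaD d * a + 3) ^ d ≤ unitBallVol d * a ^ d) :
    μ {ζ | ENNReal.ofReal a < Rad d ζ 0} ≤
      ENNReal.ofReal (Real.exp (-(lam * (2 * betaD d * a + 3) ^ d *
        gChernoff (lam * (2 * betaD d * a + 3) ^ d / (unitBallVol d * a ^ d))))) := by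
  obtain ⟨hprob, hcyl⟩ := hμ
  have hβ := betaD_ge_three d
  set B := (2 * betaD d * a + 3) ^ d with hBdef
  have hB : 0 < B := by
    have h1 : (0:ℝ) < 2 * betaD d * a + 3 := by nlinarith
    exact pow_pos h1 d
  set T := unitBallVol d * a ^ d with hTdef
  have hT : 0 < T := by
    have := unitBallVol_pos d
    positivity
  set θ := Real.log (T / (lam * B)) with hθdef
  have hθ : 0 ≤ θ := Real.log_nonneg ((one_le_div (by positivity)).mpr hcond)
  calc μ {ζ | ENNReal.ofReal a < Rad d ζ 0}
      ≤ μ {ζ : (Fin d → ℤ) → ℕ | T < ((∑ j ∈ Jfin d a, ζ j : ℕ):ℝ)} :=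
        measure_mono (event_subset d a ha)
    _ ≤ ENNReal.ofReal (Real.exp (-(θ*T))) *
          (ENNReal.ofReal (Real.exp (lam * (Real.exp θ - 1)))) ^ (Jfin d a).card :=
        measure_sum_gt_le d lam hlam μ hcyl (Jfin d a) T θ hθ
    _ ≤ _ := final_bound lam B T hlam hB hT hcond (Jfin d a).card (Jfin_card_le d a ha)
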